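/- Let α₁, α₂ ∈ (0,2) and θ ∈ (0, π/2]. Then the 2×2 matrix T₁ = [[1 − α₁sin²θ, α₁cos θ sin θ], [α₁(1−α₂)cos θ sin θ, (1−α₂)(1−α₁cos²θ)]] has operator norm strictly less than 1. -/

import Mathlib

open Matrix

private lemma gap_aux (α₁ α₂ s c a b : ℝ) (hα1 : 0 < α₁) (hα1' : α₁ < 2)
    (hα2 : 0 < α₂) (hα2' : α₂ < 2) (hs : 0 < s) (hsc : s ^ 2 + c ^ 2 = 1)
    (hab : a ≠ 0 ∨ b ≠ 0) :
    ((1 - α₁ * s ^ 2) * a + α₁ * c * s * b) ^ 2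
      + (α₁ * (1 - α₂) * c * s * a + (1 - α₂) * (1 - α₁ * c ^ 2) * b) ^ 2
      < a ^ 2 + b ^ 2 := by
  have hk1 : 0 < α₁ * (2 - α₁) := mul_pos hα1 (by linarith)
  have hk2 : 0 < α₂ * (2 - α₂) := mul_pos hα2 (by linarith)
  have hpos : 0 < α₁ * (2 - α₁) * (s * a - c * b) ^ 2
      + α₂ * (2 - α₂) * (α₁ * c * s * a + (1 - α₁ * c ^ 2) * b) ^ 2 := by
    rcases eq_or_ne (s * a - c * b) 0 with hw0 | hw0
    · have hb0 : α₁ * c * s * a + (1 - α₁ * c ^ 2) * b = b := by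
        linear_combination α₁ * c * hw0
      have hbne : b ≠ 0 := by
        rcases hab with h | h
        · intro hb
          apply h
          have hsa : s * a = 0 := by
            have := hw0
            rw [hb] at this
            linarith [this, mul_zero c]
          exact (mul_eq_zero.mp hsa).resolve_left hs.ne'
        · exact h
      have hY : 0 < α₂ * (2 - α₂) * (α₁ * c * s * a + (1 - α₁ * c ^ 2) * b) ^ 2 := by
        rw [hb0]
        exact mul_pos hk2 (pow_two_pos_of_ne_zero hbne)
      have hX : 0 ≤ α₁ * (2 - α₁) * (s * a - c * b) ^ 2 :=
        mul_nonneg hk1.le (sq_nonneg _)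
      linarith
    · have hX : 0 < α₁ * (2 - α₁) * (s * a - c * b) ^ 2 :=
        mul_pos hk1 (pow_two_pos_of_ne_zero hw0)
      have hY : 0 ≤ α₂ * (2 - α₂) * (α₁ * c * s * a + (1 - α₁ * c ^ 2) * b) ^ 2 :=
        mul_nonneg hk2.le (sq_nonneg _)
      linarith
  have hid : a ^ 2 + b ^ 2 - (((1 - α₁ * s ^ 2) * a + α₁ * c * s * b) ^ 2
      + (α₁ * (1 - α₂) * c * s * a + (1 - α₂) * (1 - α₁ * c ^ 2) * b) ^ 2)
      = α₁ * (2 - α₁) * (s * a - c * b) ^ 2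
      + α₂ * (2 - α₂) * (α₁ * c * s * a + (1 - α₁ * c ^ 2) * b) ^ 2 := by
    linear_combination (-(α₁ ^ 2) * (s * a - c * b) ^ 2) * hsc
  linarith

/-- For `α₁, α₂ ∈ (0,2)` and `θ ∈ (0, π/2]`, the GAP block `T₁` has (ℓ²) operator
norm strictly less than one. -/
theorem gap_block_opNorm_lt_one (α₁ α₂ θ : ℝ)
    (h1 : α₁ ∈ Set.Ioo (0:ℝ) 2) (h2 : α₂ ∈ Set.Ioo (0:ℝ) 2)
    (hθ : θ ∈ Set.Ioc 0 (Real.pi/2)) :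
    ‖Matrix.toEuclideanCLM (𝕜 := ℝ)
      !![1 - α₁ * Real.sin θ ^ 2, α₁ * Real.cos θ * Real.sin θ;
         α₁ * (1 - α₂) * Real.cos θ * Real.sin θ,
         (1 - α₂) * (1 - α₁ * Real.cos θ ^ 2)]‖ < 1 := by
  obtain ⟨hα1, hα1'⟩ := h1
  obtain ⟨hα2, hα2'⟩ := h2
  obtain ⟨hθ0, hθ1⟩ := hθ
  have hs : 0 < Real.sin θ := Real.sin_pos_of_pos_of_lt_pi hθ0
    (lt_of_le_of_lt hθ1 (by linarith [Real.pi_pos]))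
  have hsc : Real.sin θ ^ 2 + Real.cos θ ^ 2 = 1 := Real.sin_sq_add_cos_sq θ
  set A : Matrix (Fin 2) (Fin 2) ℝ :=
    !![1 - α₁ * Real.sin θ ^ 2, α₁ * Real.cos θ * Real.sin θ;
       α₁ * (1 - α₂) * Real.cos θ * Real.sin θ,
       (1 - α₂) * (1 - α₁ * Real.cos θ ^ 2)] with hA
  set T := Matrix.toEuclideanCLM (𝕜 := ℝ) A with hT
  have key : ∀ x : EuclideanSpace ℝ (Fin 2), x ≠ 0 → ‖T x‖ < ‖x‖ := by
    intro x hx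
    have hab : x 0 ≠ 0 ∨ x 1 ≠ 0 := by
      by_contra h
      push_neg at h
      apply hx
      ext i
      fin_cases i
      · exact h.1
      · exact h.2
    have hTx0 : (T x) 0 = (1 - α₁ * Real.sin θ ^ 2) * x 0
        + (α₁ * Real.cos θ * Real.sin θ) * x 1 := by
      have := congrFun (Matrix.ofLp_toEuclideanCLM (𝕜 := ℝ) A x) 0
      rw [hT, this]
      simp [hA, Matrix.toLin'_apply, Matrix.mulVec, dotProduct,
        Fin.sum_univ_two]
    have hTx1 : (T x) 1 = (α₁ * (1 - α₂) * Real.cos θ * Real.sin θ) * x 0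
        + ((1 - α₂) * (1 - α₁ * Real.cos θ ^ 2)) * x 1 := by
      have := congrFun (Matrix.ofLp_toEuclideanCLM (𝕜 := ℝ) A x) 1
      rw [hT, this]
      simp [hA, Matrix.toLin'_apply, Matrix.mulVec, dotProduct,
        Fin.sum_univ_two]
    have hnx : ‖x‖ ^ 2 = x 0 ^ 2 + x 1 ^ 2 := by
      rw [EuclideanSpace.norm_eq, Real.sq_sqrt (by positivity)]
      simp [Fin.sum_univ_two, sq_abs]
    have hnTx : ‖T x‖ ^ 2 = ((1 - α₁ * Real.sin θ ^ 2) * x 0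
        + α₁ * Real.cos θ * Real.sin θ * x 1) ^ 2
        + (α₁ * (1 - α₂) * Real.cos θ * Real.sin θ * x 0
        + (1 - α₂) * (1 - α₁ * Real.cos θ ^ 2) * x 1) ^ 2 := by
      rw [EuclideanSpace.norm_eq, Real.sq_sqrt (by positivity)]
      simp [Fin.sum_univ_two, hTx0, hTx1, sq_abs]
    have hlt : ‖T x‖ ^ 2 < ‖x‖ ^ 2 := by
      rw [hnx, hnTx]
      exact gap_aux α₁ α₂ (Real.sin θ) (Real.cos θ) (x 0) (x 1)
        hα1 hα1' hα2 hα2' hs hsc hab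
    exact lt_of_pow_lt_pow_left₀ 2 (norm_nonneg x) hlt
  have hne : (Metric.sphere (0 : EuclideanSpace ℝ (Fin 2)) 1).Nonempty :=
    NormedSpace.sphere_nonempty.mpr zero_le_one
  obtain ⟨x₀, hx₀s, hmax⟩ := (isCompact_sphere (0 : EuclideanSpace ℝ (Fin 2)) 1).exists_isMaxOn
    hne ((T.continuous.norm).continuousOn)
  have hx₀ : ‖x₀‖ = 1 := mem_sphere_zero_iff_norm.mp hx₀s
  have hbound : ‖T‖ ≤ ‖T x₀‖ := by
    refine T.opNorm_le_bound (norm_nonneg _) fun x => ?_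
    rcases eq_or_ne x 0 with rfl | hx
    · simp
    · have hnx : 0 < ‖x‖ := norm_pos_iff.mpr hx
      have hy : (‖x‖⁻¹ • x) ∈ Metric.sphere (0 : EuclideanSpace ℝ (Fin 2)) 1 := by
        simp [norm_smul, abs_of_pos (inv_pos.mpr hnx), inv_mul_cancel₀ hnx.ne']
      have hle := hmax hy
      simp only [Set.mem_setOf_eq, _root_.map_smul, norm_smul, Real.norm_eq_abs,
        abs_of_pos (inv_pos.mpr hnx)] at hle
      calc ‖T x‖ = ‖x‖ * (‖x‖⁻¹ * ‖T x‖) := by field_simp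
      _ ≤ ‖x‖ * ‖T x₀‖ := mul_le_mul_of_nonneg_left hle (norm_nonneg x)
      _ = ‖T x₀‖ * ‖x‖ := mul_comm _ _
  have hx₀ne : x₀ ≠ 0 := by
    intro h
    rw [h, norm_zero] at hx₀
    exact one_ne_zero hx₀.symm
  calc ‖T‖ ≤ ‖T x₀‖ := hbound
  _ < ‖x₀‖ := key x₀ hx₀ne
  _ = 1 := hx₀
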